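/- Let λ be a partition and 1̂ the maximum of P_λ. For every row i with λ_i > i, there is exactly one element of P_λ obtained from 1̂ by performing a single switch move or a single push move on the rook in row i, and this element is a coatom of P_λ; for rows i with λ_i = i no switch or push move on the rook in row i of 1̂ is possible; and the resulting map from {i : λ_i > i} to the set of coatoms of P_λ is a bijection. -/

import Mathlib

namespace RookPoset

/-- A partition with `n` parts: `part i` is the (1-based) part `λ_{i+1}`.
The parts are weakly increasing and contain the staircase (`λ_i ≥ i`, 1-based),
which in particular makes them positive. -/
structure Partition (n : ℕ) where
  part : Fin n → ℕ
  mono : Monotone part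
  staircase : ∀ i : Fin n, (i : ℕ) + 1 ≤ part i

/-- The largest part; equals `λ_n` when `n > 0`. -/
def Partition.maxPart {n : ℕ} (lam : Partition n) : ℕ :=
  Finset.univ.sup lam.part

/-- The part `λ_k` in 1-based indexing, with the convention `λ_m = n + 1` for `m > n`. -/
def Partition.partAt {n : ℕ} (lam : Partition n) (k : ℕ) : ℕ :=
  if h : 1 ≤ k ∧ k ≤ n then lam.part ⟨k - 1, by omega⟩ else n + 1

/-- The GJW sequence `(λ_1 - 1, λ_2 - 2, …, λ_n - n)` of a partition. -/
def Partition.gjw {n : ℕ} (lam : Partition n) : List ℕ :=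
  (List.finRange n).map fun i => lam.part i - ((i : ℕ) + 1)

/-- A maximal rook placement on the Ferrers board of `lam`: `col i` is the (1-based)
column of the rook in the (1-based) row `i + 1` (rows indexed bottom-up). -/
structure Placement {n : ℕ} (lam : Partition n) where
  col : Fin n → ℕ
  inj : Function.Injective col
  pos : ∀ i, 1 ≤ col i
  le_part : ∀ i, col i ≤ lam.part i

/-- The increasingly sorted list of the values `x i` over indices `i` with `(i : ℕ) < j`,
i.e. the sorted initial segment `{x_1, …, x_j}` (1-based). -/
def initSeg {n : ℕ} (x : Fin n → ℕ) (j : ℕ) : List ℕ :=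
  ((Finset.univ.filter fun i : Fin n => (i : ℕ) < j).image x).sort (· ≤ ·)

/-- The rook poset order: `x ≤ y` iff each sorted initial segment of `x` is
componentwise at most the corresponding sorted initial segment of `y`. -/
def rle {n : ℕ} {lam : Partition n} (x y : Placement lam) : Prop :=
  ∀ j : ℕ, List.Forall₂ (· ≤ ·) (initSeg x.col j) (initSeg y.col j)

/-- `y` covers `x` in the rook poset. -/
def rcovers {n : ℕ} {lam : Partition n} (x y : Placement lam) : Prop :=
  rle x y ∧ x ≠ y ∧ ∀ z : Placement lam, rle x z → rle z y → z = x ∨ z = y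

/-- `y` covers `x` in the subposet induced on `S`. -/
def rcoversIn {n : ℕ} {lam : Partition n} (S : Set (Placement lam)) (x y : Placement lam) :
    Prop :=
  x ∈ S ∧ y ∈ S ∧ rle x y ∧ x ≠ y ∧ ∀ z ∈ S, rle x z → rle z y → z = x ∨ z = y

/-- `t` is the greedy placement `1̂`: for each row in turn (bottom-up), the rook is placed
in the largest column `≤ λ_i` not used by a lower row. -/
def IsGreedy {n : ℕ} {lam : Partition n} (t : Placement lam) : Prop :=
  ∀ i : Fin n, ∀ m : ℕ, 1 ≤ m → m ≤ lam.part i →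
    (∀ k : Fin n, k < i → t.col k ≠ m) → m ≤ t.col i

/-- `x` is obtained from `y` by the switch move on the rooks in rows `i < k`:
the rectangle spanned by the rooks at `(i, y.col i)` and `(k, y.col k)` contains no other rook,
and the two rooks exchange columns. -/
def SwitchMove {n : ℕ} {lam : Partition n} (y x : Placement lam) (i k : Fin n) : Prop :=
  i < k ∧ y.col k < y.col i ∧
  (∀ r : Fin n, i ≤ r → r ≤ k → y.col k ≤ y.col r → y.col r ≤ y.col i → r = i ∨ r = k) ∧
  x.col i = y.col k ∧ x.col k = y.col i ∧
  ∀ r : Fin n, r ≠ i → r ≠ k → x.col r = y.col r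

/-- `x` is obtained from `y` by a push move on the rook in row `i`: the rook moves to an
empty column `c` to its left such that every column strictly between `c` and its old column
contains a rook in a row below row `i`. -/
def PushMove {n : ℕ} {lam : Partition n} (y x : Placement lam) (i : Fin n) : Prop :=
  ∃ c : ℕ, 1 ≤ c ∧ c < y.col i ∧ (∀ r : Fin n, y.col r ≠ c) ∧
    (∀ d : ℕ, c < d → d < y.col i → ∃ r : Fin n, r < i ∧ y.col r = d) ∧
    x.col i = c ∧ ∀ r : Fin n, r ≠ i → x.col r = y.col r

/-- `x` is obtained from `y` by a single switch or push move on the rook in row `i`. -/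
def MoveOnRow {n : ℕ} {lam : Partition n} (y x : Placement lam) (i : Fin n) : Prop :=
  (∃ k : Fin n, SwitchMove y x i k) ∨ PushMove y x i

/-- Two coatoms `c, c'` of the rook poset (with top element `t`) are entangled:
there are two distinct elements each of which is covered by both `c` and `c'`
and lies below no other coatom. -/
def Entangled {n : ℕ} {lam : Partition n} (t c c' : Placement lam) : Prop :=
  ∃ z₁ z₂ : Placement lam, z₁ ≠ z₂ ∧
    (rcovers z₁ c ∧ rcovers z₁ c' ∧
      ∀ d : Placement lam, rcovers d t → d ≠ c → d ≠ c' → ¬ rle z₁ d) ∧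
    (rcovers z₂ c ∧ rcovers z₂ c' ∧
      ∀ d : Placement lam, rcovers d t → d ≠ c → d ≠ c' → ¬ rle z₂ d)

/-- `X_I`: the set of elements of the rook poset lying below no coatom outside `I`. -/
def Xset {n : ℕ} {lam : Partition n} (t : Placement lam) (I : Set (Placement lam)) :
    Set (Placement lam) :=
  {z : Placement lam | ∀ c' : Placement lam, rcovers c' t → c' ∉ I → ¬ rle z c'}

/-- The completed permutation `σ_x` of `{1, …, λ_n}` (as a function on 1-based positions):
position `i ≤ n` holds `x_i`, and the remaining positions hold the unused values in
increasing order (i.e. each subsequent position receives the smallest value not yet used). -/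
def Placement.sigma {n : ℕ} {lam : Partition n} (x : Placement lam) : ℕ → ℕ := fun a =>
  if h : 1 ≤ a ∧ a ≤ n then x.col ⟨a - 1, by omega⟩
  else ((Finset.Icc 1 lam.maxPart \ Finset.univ.image x.col).sort (· ≤ ·)).getD (a - n - 1) 0

/-- The rank `r(x)`: the number of inversions of the completed permutation `σ_x`. -/
def Placement.rank {n : ℕ} {lam : Partition n} (x : Placement lam) : ℕ :=
  ((Finset.Icc 1 lam.maxPart ×ˢ Finset.Icc 1 lam.maxPart).filter
    fun p => p.1 < p.2 ∧ x.sigma p.2 < x.sigma p.1).card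

/-- Break a list after every entry equal to `1`. -/
def breakAfterOnes : List ℕ → List (List ℕ)
  | [] => []
  | a :: rest =>
    if a = 1 then [a] :: breakAfterOnes rest
    else
      match breakAfterOnes rest with
      | [] => [[a]]
      | b :: bs => (a :: b) :: bs

/-- The multiset of blocks of a partition: break the GJW sequence after every entry
equal to `1` and delete all entries equal to `0` (discarding empty blocks). -/
def Partition.blocks {n : ℕ} (lam : Partition n) : Multiset (List ℕ) :=
  (((breakAfterOnes lam.gjw).map fun b => b.filter (· ≠ 0)).filter
    (· ≠ ([] : List ℕ)) : List (List ℕ))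

/-- The conjugate of a block `b = (g_1, …, g_k)` ending in `1`: it is the GJW sequence of the
conjugate partition `ν'` of the partition `ν` with `ν_i = g_i + i`, where
`ν'_i = k + 2 - min {m | ν_m ≥ k + 2 - i}` with the convention `ν_{k+1} = k + 1`. -/
noncomputable def conjBlock (b : List ℕ) : List ℕ :=
  let k := b.length
  let nu : ℕ → ℕ := fun m => if m ≤ k then b.getD (m - 1) 0 + m else k + 1
  (List.range k).map fun i0 =>
    let i := i0 + 1
    (k + 2 - sInf {m : ℕ | 1 ≤ m ∧ k + 2 - i ≤ nu m}) - i

/-- A block ends in `1`. -/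
def endsInOne (b : List ℕ) : Prop := b.getLast? = some 1

/-- Two blocks are equivalent when they are equal, or one ends in `1` and the other is its
conjugate block. -/
def BlockEquiv (b b' : List ℕ) : Prop :=
  b = b' ∨ (endsInOne b ∧ b' = conjBlock b) ∨ (endsInOne b' ∧ b = conjBlock b')

/-- Two partitions have matching block data: their multisets of blocks become equal after
replacing some blocks ending in `1` by their conjugate blocks. -/
def MatchingBlocks {n m : ℕ} (lam : Partition n) (mu : Partition m) : Prop :=
  Multiset.Rel BlockEquiv lam.blocks mu.blocks

/-- The rook posets of `lam` and `mu` are isomorphic as partially ordered sets. -/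
def RookIso {n m : ℕ} (lam : Partition n) (mu : Partition m) : Prop :=
  ∃ e : Placement lam ≃ Placement mu, ∀ a b : Placement lam, rle a b ↔ rle (e a) (e b)

/-- A function `τ`, viewed as a permutation of `{1, …, N}`, is `312`-avoiding. -/
def Avoids312 (N : ℕ) (τ : ℕ → ℕ) : Prop :=
  ∀ a b c : ℕ, 1 ≤ a → a < b → b < c → c ≤ N → ¬ (τ b < τ c ∧ τ c < τ a)

/-- A permutation of `Fin N` is `312`-avoiding. -/
def Avoids312P {N : ℕ} (τ : Equiv.Perm (Fin N)) : Prop :=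
  ∀ a b c : Fin N, a < b → b < c → ¬ (τ b < τ c ∧ τ c < τ a)

/-- The Bruhat order on permutations, characterized by componentwise dominance of the
increasingly sorted initial segments. -/
def bruhatLE {N : ℕ} (σ τ : Equiv.Perm (Fin N)) : Prop :=
  ∀ j : ℕ, List.Forall₂ (· ≤ ·)
    (initSeg (fun a : Fin N => (σ a : ℕ)) j) (initSeg (fun a : Fin N => (τ a : ℕ)) j)



/-! ### Auxiliary development -/

section Aux

open Finset

variable {n : ℕ} {lam : Partition n}

/-- Counting function: number of rows `r < j` whose column is at least `q`. -/
def cnt (x : Fin n → ℕ) (j q : ℕ) : ℕ :=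
  (Finset.univ.filter fun r : Fin n => (r : ℕ) < j ∧ q ≤ x r).card

lemma cnt_eq_sum (x : Fin n → ℕ) (j q : ℕ) :
    cnt x j q = ∑ r : Fin n, if (r : ℕ) < j ∧ q ≤ x r then 1 else 0 :=
  Finset.card_filter _ _

lemma cnt_succ (x : Fin n → ℕ) {j : ℕ} (hj : j < n) (q : ℕ) :
    cnt x (j + 1) q = cnt x j q + if q ≤ x ⟨j, hj⟩ then 1 else 0 := by
  classical
  unfold cnt
  rw [Finset.card_filter, Finset.card_filter,
    ← Finset.add_sum_erase (a := (⟨j, hj⟩ : Fin n)) (s := Finset.univ)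
      (f := fun r : Fin n => if (r : ℕ) < j + 1 ∧ q ≤ x r then 1 else 0) (Finset.mem_univ _),
    ← Finset.add_sum_erase (a := (⟨j, hj⟩ : Fin n)) (s := Finset.univ)
      (f := fun r : Fin n => if (r : ℕ) < j ∧ q ≤ x r then 1 else 0) (Finset.mem_univ _)]
  have hcongr : ∀ r ∈ Finset.univ.erase (⟨j, hj⟩ : Fin n),
      (if (r : ℕ) < j + 1 ∧ q ≤ x r then 1 else 0) = if (r : ℕ) < j ∧ q ≤ x r then 1 else 0 := by
    intro r hr
    have : (r : ℕ) ≠ j := by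
      simpa [Fin.ext_iff] using (Finset.mem_erase.mp hr).1
    split_ifs <;> omega
  rw [Finset.sum_congr rfl hcongr]
  simp only
  split_ifs <;> omega

lemma cnt_congr {x y : Fin n → ℕ} {j : ℕ} (h : ∀ r : Fin n, (r : ℕ) < j → x r = y r) (q : ℕ) :
    cnt x j q = cnt y j q := by
  unfold cnt
  congr 1
  apply Finset.filter_congr
  intro r _
  constructor
  · rintro ⟨h1, h2⟩; exact ⟨h1, (h r h1) ▸ h2⟩
  · rintro ⟨h1, h2⟩; exact ⟨h1, (h r h1) ▸ h2⟩

lemma le_col_iff_of_cnt_eq {x y : Fin n → ℕ} {r : Fin n} {q : ℕ}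
    (h1 : cnt x (r : ℕ) q = cnt y (r : ℕ) q)
    (h2 : cnt x ((r : ℕ) + 1) q = cnt y ((r : ℕ) + 1) q) :
    (q ≤ x r ↔ q ≤ y r) := by
  have hx := cnt_succ x r.isLt q
  have hy := cnt_succ y r.isLt q
  rw [show (⟨(r : ℕ), r.isLt⟩ : Fin n) = r from rfl] at hx hy
  constructor <;> intro h <;> by_contra hc <;> simp [h, hc] at hx hy <;> omega

lemma eq_col_of_cnt_eq {x y : Fin n → ℕ} {r : Fin n}
    (h : ∀ q, cnt x (r : ℕ) q = cnt y (r : ℕ) q ∧ cnt x ((r : ℕ) + 1) q = cnt y ((r : ℕ) + 1) q) :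
    x r = y r := by
  have h1 := (le_col_iff_of_cnt_eq (h (x r)).1 (h (x r)).2).mp le_rfl
  have h2 := (le_col_iff_of_cnt_eq (h (y r)).1 (h (y r)).2).mpr le_rfl
  omega

lemma forall2_of_countP {la lb : List ℕ} (hlen : la.length = lb.length)
    (ha : la.Pairwise (· ≤ ·)) (hb : lb.Pairwise (· ≤ ·))
    (h : ∀ q : ℕ, la.countP (fun v => decide (q ≤ v)) ≤ lb.countP (fun v => decide (q ≤ v))) :
    List.Forall₂ (· ≤ ·) la lb := by
  induction la generalizing lb with
  | nil =>
    cases lb with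
    | nil => exact List.Forall₂.nil
    | cons b bs => simp at hlen
  | cons a as ih =>
    cases lb with
    | nil => simp at hlen
    | cons b bs =>
      have hamin : ∀ v ∈ as, a ≤ v := (List.pairwise_cons.mp ha).1
      have hbmin : ∀ v ∈ bs, b ≤ v := (List.pairwise_cons.mp hb).1
      have hlen' : as.length = bs.length := by simpa using hlen
      have hab : a ≤ b := by
        by_contra hab
        push_neg at hab
        have h1 : (a :: as).countP (fun v => decide (a ≤ v)) = (a :: as).length := by
          rw [List.countP_eq_length]
          intro v hv
          simp only [decide_eq_true_eq]
          rcases List.mem_cons.mp hv with h | h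
          · omega
          · exact hamin v h
        have h2 : (b :: bs).countP (fun v => decide (a ≤ v)) ≤ bs.length := by
          have h2' : (b :: bs).countP (fun v => decide (a ≤ v))
              = bs.countP (fun v => decide (a ≤ v)) := by
            simp [List.countP_cons, show ¬ a ≤ b from by omega]
          have hle := List.countP_le_length (l := bs) (p := fun v => decide (a ≤ v))
          omega
        have := h a
        simp only [List.length_cons] at h1 hlen
        omega
      refine List.Forall₂.cons hab
        (ih hlen' (List.pairwise_cons.mp ha).2 (List.pairwise_cons.mp hb).2 ?_)
      intro q
      have hq := h q
      have hca : (a :: as).countP (fun v => decide (q ≤ v))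
          = as.countP (fun v => decide (q ≤ v)) + (if q ≤ a then 1 else 0) := by
        simp [List.countP_cons]
      have hcb : (b :: bs).countP (fun v => decide (q ≤ v))
          = bs.countP (fun v => decide (q ≤ v)) + (if q ≤ b then 1 else 0) := by
        simp [List.countP_cons]
      by_cases hqa : q ≤ a
      · have hqb' : q ≤ b := le_trans hqa hab
        rw [if_pos hqa] at hca
        rw [if_pos hqb'] at hcb
        omega
      · by_cases hqb : q ≤ b
        · rw [if_neg hqa] at hca
          rw [if_pos hqb] at hcb
          have hall : (b :: bs).countP (fun v => decide (q ≤ v)) = (b :: bs).length := by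
            rw [List.countP_eq_length]
            intro v hv
            simp only [decide_eq_true_eq]
            rcases List.mem_cons.mp hv with h' | h'
            · omega
            · exact le_trans hqb (hbmin v h')
          have hle := List.countP_le_length (l := as) (p := fun v => decide (q ≤ v))
          simp only [List.length_cons] at hall
          omega
        · rw [if_neg hqa] at hca
          rw [if_neg hqb] at hcb
          omega

lemma countP_forall2 {la lb : List ℕ} (h : List.Forall₂ (· ≤ ·) la lb) (q : ℕ) :
    la.countP (fun v => decide (q ≤ v)) ≤ lb.countP (fun v => decide (q ≤ v)) := by
  induction h with
  | nil => simp
  | @cons a b as bs hab _ ih =>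
    rw [List.countP_cons, List.countP_cons]
    have : (if (decide (q ≤ a)) = true then 1 else 0)
        ≤ (if (decide (q ≤ b)) = true then 1 else 0) := by
      simp only [decide_eq_true_eq]
      split_ifs <;> omega
    omega

lemma countP_initSeg {x : Fin n → ℕ} (hx : Function.Injective x) (j q : ℕ) :
    (initSeg x j).countP (fun v => decide (q ≤ v)) = cnt x j q := by
  classical
  have h1 : ((initSeg x j : List ℕ) : Multiset ℕ).countP (fun v => q ≤ v)
      = (initSeg x j).countP (fun v => decide (q ≤ v)) := Multiset.coe_countP _ _
  have h2 : ((initSeg x j : List ℕ) : Multiset ℕ)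
      = ((Finset.univ.filter fun i : Fin n => (i : ℕ) < j).image x).val :=
    Finset.sort_eq _ _
  rw [← h1, h2]
  have h3 : Multiset.countP (fun v => q ≤ v)
        ((Finset.univ.filter fun i : Fin n => (i : ℕ) < j).image x).val
      = (((Finset.univ.filter fun i : Fin n => (i : ℕ) < j).image x).filter
          fun v => q ≤ v).card := by
    rw [Multiset.countP_eq_card_filter]
    rfl
  rw [h3]
  have h4 : (((Finset.univ.filter fun i : Fin n => (i : ℕ) < j).image x).filter
        fun v => q ≤ v)
      = ((Finset.univ.filter fun i : Fin n => (i : ℕ) < j).filter fun r => q ≤ x r).image x := by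
    ext v
    simp only [Finset.mem_filter, Finset.mem_image]
    constructor
    · rintro ⟨⟨r, hr, rfl⟩, hq⟩
      exact ⟨r, ⟨hr, hq⟩, rfl⟩
    · rintro ⟨r, ⟨hr, hq⟩, rfl⟩
      exact ⟨⟨r, hr, rfl⟩, hq⟩
  rw [h4, Finset.card_image_of_injective _ hx, Finset.filter_filter]
  rfl

lemma length_initSeg {x : Fin n → ℕ} (hx : Function.Injective x) (j : ℕ) :
    (initSeg x j).length = (Finset.univ.filter fun i : Fin n => (i : ℕ) < j).card := by
  unfold initSeg
  rw [Finset.length_sort, Finset.card_image_of_injective _ hx]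

lemma rle_iff_cnt (x y : Placement lam) :
    rle x y ↔ ∀ j q, cnt x.col j q ≤ cnt y.col j q := by
  constructor
  · intro h j q
    have := countP_forall2 (h j) q
    rwa [countP_initSeg x.inj, countP_initSeg y.inj] at this
  · intro h j
    apply forall2_of_countP
    · rw [length_initSeg x.inj, length_initSeg y.inj]
    · exact Finset.pairwise_sort _ _
    · exact Finset.pairwise_sort _ _
    · intro q
      rw [countP_initSeg x.inj, countP_initSeg y.inj]
      exact h j q

lemma Placement.ext' {x y : Placement lam} (h : ∀ r, x.col r = y.col r) : x = y := by
  cases x; cases y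
  simp only [Placement.mk.injEq]
  funext r
  exact h r

end Aux

section Main

open Finset

variable {n : ℕ} {lam : Partition n}

lemma exists_coatom (t : Placement lam) (ht : IsGreedy t) (i : Fin n)
    (hi : (i : ℕ) + 1 < lam.part i) :
    ∃ c : Placement lam, MoveOnRow t c i ∧ rcovers c t ∧
      (∀ x : Placement lam, MoveOnRow t x i → x = c) ∧
      c.col i < t.col i ∧ (∀ r : Fin n, r ≠ i → t.col r ≤ c.col r) ∧
      (∀ x : Placement lam, rle x t → (∀ r : Fin n, (r : ℕ) < (i : ℕ) → x.col r = t.col r) →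
        x.col i ≠ t.col i → rle x c) := by
  classical
  set c0 := t.col i with hc0def
  have hc0pos : 1 ≤ c0 := t.pos i
  have hc0le : c0 ≤ lam.part i := t.le_part i
  -- greedy fact: columns in (c0, λ_i] are occupied by rows below i
  have G1 : ∀ m, c0 < m → m ≤ lam.part i → ∃ r : Fin n, r < i ∧ t.col r = m := by
    intro m h1 h2
    by_contra hcon
    push_neg at hcon
    have := ht i m (by omega) h2 (fun k hk => hcon k hk)
    omega
  set B : Finset ℕ := (Finset.univ.filter fun r : Fin n => r < i).image t.col with hBdef
  have hBmem : ∀ m, m ∈ B ↔ ∃ r : Fin n, r < i ∧ t.col r = m := by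
    intro m
    simp [hBdef, Finset.mem_image, Finset.mem_filter]
  have hBcard : B.card = (i : ℕ) := by
    rw [hBdef, Finset.card_image_of_injective _ t.inj]
    have : (Finset.univ.filter fun r : Fin n => r < i) = Finset.Iio i := by
      ext r; simp
    rw [this, Fin.card_Iio]
  have hIocB : Finset.Ioc c0 (lam.part i) ⊆ B := by
    intro m hm
    rw [Finset.mem_Ioc] at hm
    exact (hBmem m).mpr (G1 m hm.1 hm.2)
  have hfree : (Finset.Icc 1 (c0 - 1) \ B).Nonempty := by
    rw [← Finset.card_pos]
    have h1 : (Finset.Icc 1 (c0 - 1)).card = c0 - 1 := by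
      rw [Nat.card_Icc]; omega
    have h2 : (Finset.Ioc c0 (lam.part i)).card = lam.part i - c0 := Nat.card_Ioc _ _
    have h3 : (B \ Finset.Ioc c0 (lam.part i)).card = (i : ℕ) - (lam.part i - c0) := by
      rw [Finset.card_sdiff_of_subset hIocB, hBcard, h2]
    have h4 : Finset.Icc 1 (c0 - 1) ∩ B ⊆ B \ Finset.Ioc c0 (lam.part i) := by
      intro m hm
      rw [Finset.mem_inter] at hm
      rw [Finset.mem_sdiff]
      refine ⟨hm.2, ?_⟩
      rw [Finset.mem_Ioc]
      have := Finset.mem_Icc.mp hm.1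
      omega
    have h5 := Finset.card_le_card h4
    have h6 : (Finset.Icc 1 (c0 - 1) \ B).card + (Finset.Icc 1 (c0 - 1) ∩ B).card
        = (Finset.Icc 1 (c0 - 1)).card := Finset.card_sdiff_add_card_inter _ _
    have h7 := Finset.card_le_card hIocB
    omega
  set d : ℕ := (Finset.Icc 1 (c0 - 1) \ B).max' hfree with hddef
  have hdmem := Finset.max'_mem _ hfree
  rw [Finset.mem_sdiff, Finset.mem_Icc] at hdmem
  have hd1 : 1 ≤ d := hdmem.1.1
  have hdc0 : d < c0 := by have := hdmem.1.2; omega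
  have hdnB : ∀ r : Fin n, r < i → t.col r ≠ d := by
    intro r hr he
    exact hdmem.2 ((hBmem d).mpr ⟨r, hr, he⟩)
  have hdmax : ∀ q, d < q → q < c0 → ∃ r : Fin n, r < i ∧ t.col r = q := by
    intro q h1 h2
    have hqB : q ∈ B := by
      by_contra hq
      have hqf : q ∈ Finset.Icc 1 (c0 - 1) \ B := by
        rw [Finset.mem_sdiff, Finset.mem_Icc]
        exact ⟨⟨by omega, by omega⟩, hq⟩
      have := Finset.le_max' _ q hqf
      omega
    exact (hBmem q).mp hqB
  -- the first row above i whose rook is weakly left of c0 sits in column d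
  have firstlow : ∀ r : Fin n, i < r → t.col r ≤ c0 →
      ∃ k' : Fin n, i < k' ∧ k' ≤ r ∧ t.col k' = d := by
    have key : ∀ m : ℕ, ∀ r : Fin n, (r : ℕ) ≤ m → i < r → t.col r ≤ c0 →
        ∃ k' : Fin n, i < k' ∧ k' ≤ r ∧ t.col k' = d := by
      intro m
      induction m with
      | zero => intro r hr hir _; omega
      | succ m ih =>
        intro r hr hir hcol
        by_cases hmid : ∃ r' : Fin n, i < r' ∧ r' < r ∧ t.col r' ≤ c0
        · obtain ⟨r', h1, h2, h3⟩ := hmid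
          obtain ⟨k', hk1, hk2, hk3⟩ := ih r' (by omega) h1 h3
          exact ⟨k', hk1, le_trans hk2 (le_of_lt h2), hk3⟩
        · push_neg at hmid
          refine ⟨r, hir, le_rfl, ?_⟩
          have hne_c0 : t.col r ≠ c0 := by
            intro h
            have : r = i := t.inj h
            omega
          have hnotmid : ¬ (d < t.col r ∧ t.col r < c0) := by
            rintro ⟨h1, h2⟩
            obtain ⟨r0, hr0, he⟩ := hdmax _ h1 h2
            have : r0 = r := t.inj he
            omega
          have hged : d ≤ t.col r := by
            by_contra hlt
            push_neg at hlt
            have hgre := ht r d hd1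
              (le_trans (le_of_lt hdc0) (le_trans hc0le (lam.mono (le_of_lt hir))))
              (fun k hk => by
                rcases lt_trichotomy k i with hki | hki | hki
                · exact hdnB k hki
                · subst hki; omega
                · have := hmid k hki hk
                  omega)
            omega
          by_contra hne
          have h1 : d < t.col r := by omega
          have h2 : t.col r < c0 := by omega
          exact hnotmid ⟨h1, h2⟩
    intro r hir hcol
    exact key (r : ℕ) r le_rfl hir hcol
  by_cases hS : ∃ k : Fin n, t.col k = d
  · -- switch case
    obtain ⟨k, hk⟩ := hS
    have hkne : k ≠ i := by
      intro h; subst h; omega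
    have hknotlt : ¬ k < i := fun h => hdnB k h hk
    have hik : i < k := by omega
    have HIGH : ∀ r : Fin n, i < r → r < k → c0 < t.col r := by
      intro r h1 h2
      by_contra hle
      push_neg at hle
      obtain ⟨k', hk1, hk2, hk3⟩ := firstlow r h1 hle
      have : k' = k := t.inj (hk3.trans hk.symm)
      omega
    set ccol : Fin n → ℕ := t.col ∘ (Equiv.swap i k) with hccoldef
    have hci : ccol i = d := by
      simp [hccoldef, Equiv.swap_apply_left, hk]
    have hck : ccol k = c0 := by
      simp [hccoldef, Equiv.swap_apply_right]; rfl
    have hcr : ∀ r : Fin n, r ≠ i → r ≠ k → ccol r = t.col r := by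
      intro r h1 h2
      simp [hccoldef, Equiv.swap_apply_of_ne_of_ne h1 h2]
    have hcinj : Function.Injective ccol := t.inj.comp (Equiv.swap i k).injective
    set c : Placement lam := ⟨ccol,
      hcinj,
      by
        intro r
        rcases eq_or_ne r i with rfl | h1
        · rw [hci]; exact hd1
        rcases eq_or_ne r k with rfl | h2
        · rw [hck]; exact hc0pos
        · rw [hcr r h1 h2]; exact t.pos r,
      by
        intro r
        rcases eq_or_ne r i with rfl | h1
        · rw [hci]; omega
        rcases eq_or_ne r k with rfl | h2
        · rw [hck]; exact le_trans hc0le (lam.mono (le_of_lt hik))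
        · rw [hcr r h1 h2]; exact t.le_part r⟩ with hcdef
    have hccol : c.col = ccol := rfl
    have CF : ∀ j q, cnt c.col j q
        + (if (i : ℕ) < j ∧ j ≤ (k : ℕ) ∧ d < q ∧ q ≤ c0 then 1 else 0) = cnt t.col j q := by
      intro j q
      have hmemk : k ∈ Finset.univ.erase i := Finset.mem_erase.mpr ⟨hkne, Finset.mem_univ _⟩
      rw [cnt_eq_sum, cnt_eq_sum,
        ← Finset.add_sum_erase (a := i) (s := Finset.univ)
          (f := fun r : Fin n => if (r : ℕ) < j ∧ q ≤ c.col r then 1 else 0) (Finset.mem_univ _),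
        ← Finset.add_sum_erase (a := i) (s := Finset.univ)
          (f := fun r : Fin n => if (r : ℕ) < j ∧ q ≤ t.col r then 1 else 0) (Finset.mem_univ _),
        ← Finset.add_sum_erase (a := k) (s := Finset.univ.erase i)
          (f := fun r : Fin n => if (r : ℕ) < j ∧ q ≤ c.col r then 1 else 0) hmemk,
        ← Finset.add_sum_erase (a := k) (s := Finset.univ.erase i)
          (f := fun r : Fin n => if (r : ℕ) < j ∧ q ≤ t.col r then 1 else 0) hmemk]
      have hrest : ∀ r ∈ (Finset.univ.erase i).erase k,
          (if (r : ℕ) < j ∧ q ≤ c.col r then 1 else 0)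
            = if (r : ℕ) < j ∧ q ≤ t.col r then 1 else 0 := by
        intro r hr
        have h2 := (Finset.mem_erase.mp hr).1
        have h1 := (Finset.mem_erase.mp (Finset.mem_erase.mp hr).2).1
        rw [hccol, hcr r h1 h2]
      rw [Finset.sum_congr rfl hrest, hccol, hci, hck]
      have hikn : (i : ℕ) < (k : ℕ) := hik
      split_ifs <;> omega
    -- basic facts
    have hrlect : rle c t := by
      rw [rle_iff_cnt]
      intro j q
      have := CF j q
      omega
    have hcnet : c ≠ t := by
      intro h
      have : c.col i = t.col i := by rw [h]
      rw [hccol, hci] at this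
      omega
    -- the move
    have hmove : MoveOnRow t c i := by
      left
      refine ⟨k, hik, by omega, ?_, by rw [hccol, hci, hk], by rw [hccol, hck], ?_⟩
      · intro r hir hrk h1 h2
        by_contra hcon
        push_neg at hcon
        have hri : r ≠ i := hcon.1
        have hrk' : r ≠ k := hcon.2
        have hir' : i < r := lt_of_le_of_ne hir (Ne.symm hri)
        have hrk'' : r < k := lt_of_le_of_ne hrk hrk'
        have := HIGH r hir' hrk''
        rw [hk] at h1
        omega
      · intro r h1 h2
        rw [hccol, hcr r h1 h2]
    -- covering
    have hcov : ∀ z : Placement lam, rle c z → rle z t → z = c ∨ z = t := by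
      intro z hcz hzt
      have Hcz := (rle_iff_cnt c z).mp hcz
      have Hzt := (rle_iff_cnt z t).mp hzt
      have pin : ∀ j q, ¬((i : ℕ) < j ∧ j ≤ (k : ℕ) ∧ d < q ∧ q ≤ c0) →
          cnt z.col j q = cnt t.col j q := by
        intro j q hoff
        have h1 := Hzt j q
        have h2 := Hcz j q
        have h3 := CF j q
        rw [if_neg hoff] at h3
        omega
      have roweq : ∀ r : Fin n, r ≠ i → r ≠ k → z.col r = t.col r := by
        intro r hri hrk
        rcases lt_trichotomy (r : ℕ) (i : ℕ) with hlow | heq | hhigh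
        · exact eq_col_of_cnt_eq fun q =>
            ⟨pin _ q (by omega), pin _ q (by omega)⟩
        · exact absurd (by omega : r = i) hri
        · rcases lt_trichotomy (r : ℕ) (k : ℕ) with hmid | heq2 | hup
          · have hv : c0 < t.col r := HIGH r (by omega) (by omega)
            have e1 := le_col_iff_of_cnt_eq (x := z.col) (y := t.col) (r := r) (q := t.col r)
              (pin _ _ (by omega)) (pin _ _ (by omega))
            have e2 := le_col_iff_of_cnt_eq (x := z.col) (y := t.col) (r := r) (q := t.col r + 1)
              (pin _ _ (by omega)) (pin _ _ (by omega))
            have := e1.mpr le_rfl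
            have := e2.mp
            omega
          · exact absurd (by omega : r = k) hrk
          · exact eq_col_of_cnt_eq fun q =>
              ⟨pin _ q (by omega), pin _ q (by omega)⟩
      have hzi_le : z.col i ≤ c0 := by
        have e := le_col_iff_of_cnt_eq (x := z.col) (y := t.col) (r := i) (q := c0 + 1)
          (pin _ _ (by omega)) (pin _ _ (by omega))
        have := e.mp
        omega
      have hzi_ge : d ≤ z.col i := by
        have e := le_col_iff_of_cnt_eq (x := z.col) (y := t.col) (r := i) (q := d)
          (pin _ _ (by omega)) (pin _ _ (by omega))
        have := e.mpr (by omega)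
        omega
      have hzk_le : z.col k ≤ c0 := by
        have e := le_col_iff_of_cnt_eq (x := z.col) (y := t.col) (r := k) (q := c0 + 1)
          (pin _ _ (by omega)) (pin _ _ (by omega))
        have h' := e.mp
        rw [hk] at h'
        omega
      have hzk_ge : d ≤ z.col k := by
        have e := le_col_iff_of_cnt_eq (x := z.col) (y := t.col) (r := k) (q := d)
          (pin _ _ (by omega)) (pin _ _ (by omega))
        have h' := e.mpr (by rw [hk])
        omega
      have hnomid : ∀ w : Fin n, w = i ∨ w = k → ¬(d < z.col w ∧ z.col w < c0) := by
        rintro w hw ⟨h1, h2⟩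
        obtain ⟨r0, hr0i, hr0⟩ := hdmax (z.col w) h1 h2
        have hr0ne : r0 ≠ i := by omega
        have hr0nk : r0 ≠ k := by omega
        have hr0z : z.col r0 = z.col w := by rw [roweq r0 hr0ne hr0nk, hr0]
        have : r0 = w := z.inj hr0z
        rcases hw with rfl | rfl <;> omega
      have hzi : z.col i = d ∨ z.col i = c0 := by
        have := hnomid i (Or.inl rfl)
        omega
      have hzk : z.col k = d ∨ z.col k = c0 := by
        have := hnomid k (Or.inr rfl)
        omega
      have hzik : z.col i ≠ z.col k := fun h => hkne (z.inj h).symm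
      rcases hzi with hzi | hzi
      · left
        apply Placement.ext'
        intro r
        rcases eq_or_ne r i with rfl | h1
        · rw [hzi, hccol, hci]
        rcases eq_or_ne r k with rfl | h2
        · rw [hccol, hck]; omega
        · rw [roweq r h1 h2, hccol, hcr r h1 h2]
      · right
        apply Placement.ext'
        intro r
        rcases eq_or_ne r i with rfl | h1
        · rw [hzi]
        rcases eq_or_ne r k with rfl | h2
        · rw [hk]; omega
        · exact roweq r h1 h2
    -- uniqueness of the move
    have huniq : ∀ x : Placement lam, MoveOnRow t x i → x = c := by
      intro x hx
      rcases hx with ⟨k', hik', hlt, hrect, hxi, hxk, hxo⟩ | hpush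
      · have hk'le : t.col k' ≤ d := by
          by_contra h
          push_neg at h
          obtain ⟨r0, hr0, he⟩ := hdmax _ h hlt
          have : r0 = k' := t.inj he
          omega
        have hk'col : t.col k' = d := by
          by_contra hne'
          have hlt' : t.col k' < d := by omega
          obtain ⟨k'', h1, h2, h3⟩ := firstlow k' hik' (by omega)
          have := hrect k'' (le_of_lt h1) h2 (by rw [h3]; omega) (by rw [h3]; omega)
          rcases this with h | h
          · omega
          · rw [h] at h3; exact hne' h3
        have hkk' : k' = k := t.inj (hk'col.trans hk.symm)
        subst hkk'
        apply Placement.ext'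
        intro r
        rcases eq_or_ne r i with rfl | h1
        · rw [hxi, hccol, hci, hk'col]
        rcases eq_or_ne r k' with rfl | h2
        · rw [hxk, hccol, hck]
        · rw [hxo r h1 h2, hccol, hcr r h1 h2]
      · exfalso
        obtain ⟨c', h1, h2, hunocc, hbetween, _, _⟩ := hpush
        have hc'le : c' ≤ d := by
          by_contra h
          push_neg at h
          obtain ⟨r0, _, he⟩ := hdmax c' h h2
          exact hunocc r0 he
        rcases eq_or_lt_of_le hc'le with rfl | hlt'
        · exact hunocc k hk
        · obtain ⟨r0, hr0, he⟩ := hbetween d hlt' (by omega)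
          exact hdnB r0 hr0 he
    -- domination
    have hdom : ∀ x : Placement lam, rle x t →
        (∀ r : Fin n, (r : ℕ) < (i : ℕ) → x.col r = t.col r) →
        x.col i ≠ t.col i → rle x c := by
      intro x hxt hlow hne
      have Hxt := (rle_iff_cnt x t).mp hxt
      have hxi_le : x.col i ≤ c0 := by
        by_contra h
        push_neg at h
        have ha := cnt_succ x.col i.isLt (c0 + 1)
        have hb := cnt_succ t.col i.isLt (c0 + 1)
        rw [show (⟨(i : ℕ), i.isLt⟩ : Fin n) = i from rfl] at ha hb
        rw [if_pos (by omega)] at ha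
        rw [if_neg (by omega)] at hb
        have h1 := Hxt ((i : ℕ) + 1) (c0 + 1)
        have h2 := cnt_congr hlow (c0 + 1)
        omega
      have hxi_lt : x.col i < c0 := by
        rcases eq_or_lt_of_le hxi_le with h | h
        · exact absurd h hne
        · exact h
      have hxi_led : x.col i ≤ d := by
        by_contra h
        push_neg at h
        obtain ⟨r0, hr0, he⟩ := hdmax _ h hxi_lt
        have : x.col r0 = x.col i := by rw [hlow r0 hr0, he]
        have : r0 = i := x.inj this
        omega
      rw [rle_iff_cnt]
      intro j q
      have hCF := CF j q
      by_cases hR : (i : ℕ) < j ∧ j ≤ (k : ℕ) ∧ d < q ∧ q ≤ c0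
      · obtain ⟨hj1, hj2, hq1, hq2⟩ := hR
        have hstrict : cnt x.col j q < cnt t.col j q := by
          rw [cnt_eq_sum, cnt_eq_sum]
          apply Finset.sum_lt_sum
          · intro r _
            by_cases h1 : (r : ℕ) < j ∧ q ≤ x.col r
            · have h2 : q ≤ t.col r := by
                rcases lt_trichotomy (r : ℕ) (i : ℕ) with hc | hc | hc
                · rw [← hlow r hc]; exact h1.2
                · have hri : r = i := by omega
                  have := h1.2
                  rw [hri] at this
                  omega
                · have := HIGH r (by omega) (by omega)
                  omega
              rw [if_pos h1, if_pos ⟨h1.1, h2⟩]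
            · rw [if_neg h1]
              exact Nat.zero_le _
          · refine ⟨i, Finset.mem_univ _, ?_⟩
            rw [if_neg (by omega), if_pos ⟨hj1, hq2⟩]
            omega
        rw [if_pos ⟨hj1, hj2, hq1, hq2⟩] at hCF
        omega
      · rw [if_neg hR] at hCF
        have := Hxt j q
        omega
    exact ⟨c, hmove, ⟨hrlect, hcnet, hcov⟩, huniq,
      by rw [hccol, hci]; omega,
      (by
        intro r hr
        rcases eq_or_ne r k with rfl | h2
        · rw [hccol, hck, hk]; omega
        · rw [hccol, hcr r hr h2]),
      hdom⟩
  · -- push case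
    push_neg at hS
    have hunocc : ∀ r : Fin n, t.col r ≠ d := hS
    have HIGH : ∀ r : Fin n, i < r → c0 < t.col r := by
      intro r h1
      by_contra hle
      push_neg at hle
      obtain ⟨k', _, _, hk3⟩ := firstlow r h1 hle
      exact hunocc k' hk3
    set ccol : Fin n → ℕ := Function.update t.col i d with hccoldef
    have hci : ccol i = d := by simp [hccoldef]
    have hcr : ∀ r : Fin n, r ≠ i → ccol r = t.col r := by
      intro r h1
      simp [hccoldef, Function.update_of_ne h1]
    have hcinj : Function.Injective ccol := by
      intro a b hab
      rcases eq_or_ne a i with rfl | ha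
      · rcases eq_or_ne b a with rfl | hb
        · rfl
        · rw [hci, hcr b hb] at hab
          exact absurd hab.symm (hunocc b)
      · rcases eq_or_ne b i with rfl | hb
        · rw [hci, hcr a ha] at hab
          exact absurd hab (hunocc a)
        · rw [hcr a ha, hcr b hb] at hab
          exact t.inj hab
    set c : Placement lam := ⟨ccol,
      hcinj,
      by
        intro r
        rcases eq_or_ne r i with rfl | h1
        · rw [hci]; exact hd1
        · rw [hcr r h1]; exact t.pos r,
      by
        intro r
        rcases eq_or_ne r i with rfl | h1
        · rw [hci]; omega
        · rw [hcr r h1]; exact t.le_part r⟩ with hcdef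
    have hccol : c.col = ccol := rfl
    have CF : ∀ j q, cnt c.col j q
        + (if (i : ℕ) < j ∧ d < q ∧ q ≤ c0 then 1 else 0) = cnt t.col j q := by
      intro j q
      rw [cnt_eq_sum, cnt_eq_sum,
        ← Finset.add_sum_erase (a := i) (s := Finset.univ)
          (f := fun r : Fin n => if (r : ℕ) < j ∧ q ≤ c.col r then 1 else 0) (Finset.mem_univ _),
        ← Finset.add_sum_erase (a := i) (s := Finset.univ)
          (f := fun r : Fin n => if (r : ℕ) < j ∧ q ≤ t.col r then 1 else 0) (Finset.mem_univ _)]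
      have hrest : ∀ r ∈ Finset.univ.erase i,
          (if (r : ℕ) < j ∧ q ≤ c.col r then 1 else 0)
            = if (r : ℕ) < j ∧ q ≤ t.col r then 1 else 0 := by
        intro r hr
        rw [hccol, hcr r (Finset.mem_erase.mp hr).1]
      rw [Finset.sum_congr rfl hrest, hccol, hci]
      split_ifs <;> omega
    have hrlect : rle c t := by
      rw [rle_iff_cnt]
      intro j q
      have := CF j q
      omega
    have hcnet : c ≠ t := by
      intro h
      have : c.col i = t.col i := by rw [h]
      rw [hccol, hci] at this
      omega
    have hmove : MoveOnRow t c i := by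
      right
      refine ⟨d, hd1, by omega, hunocc, ?_, by rw [hccol, hci], ?_⟩
      · intro d' h1 h2
        exact hdmax d' h1 h2
      · intro r h1
        rw [hccol, hcr r h1]
    have hcov : ∀ z : Placement lam, rle c z → rle z t → z = c ∨ z = t := by
      intro z hcz hzt
      have Hcz := (rle_iff_cnt c z).mp hcz
      have Hzt := (rle_iff_cnt z t).mp hzt
      have pin : ∀ j q, ¬((i : ℕ) < j ∧ d < q ∧ q ≤ c0) →
          cnt z.col j q = cnt t.col j q := by
        intro j q hoff
        have h1 := Hzt j q
        have h2 := Hcz j q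
        have h3 := CF j q
        rw [if_neg hoff] at h3
        omega
      have roweq : ∀ r : Fin n, r ≠ i → z.col r = t.col r := by
        intro r hri
        rcases lt_trichotomy (r : ℕ) (i : ℕ) with hlow | heq | hhigh
        · exact eq_col_of_cnt_eq fun q =>
            ⟨pin _ q (by omega), pin _ q (by omega)⟩
        · exact absurd (by omega : r = i) hri
        · have hv : c0 < t.col r := HIGH r (by omega)
          have e1 := le_col_iff_of_cnt_eq (x := z.col) (y := t.col) (r := r) (q := t.col r)
            (pin _ _ (by omega)) (pin _ _ (by omega))
          have e2 := le_col_iff_of_cnt_eq (x := z.col) (y := t.col) (r := r) (q := t.col r + 1)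
            (pin _ _ (by omega)) (pin _ _ (by omega))
          have := e1.mpr le_rfl
          have := e2.mp
          omega
      have hzi_le : z.col i ≤ c0 := by
        have e := le_col_iff_of_cnt_eq (x := z.col) (y := t.col) (r := i) (q := c0 + 1)
          (pin _ _ (by omega)) (pin _ _ (by omega))
        have := e.mp
        omega
      have hzi_ge : d ≤ z.col i := by
        have e := le_col_iff_of_cnt_eq (x := z.col) (y := t.col) (r := i) (q := d)
          (pin _ _ (by omega)) (pin _ _ (by omega))
        have := e.mpr (by omega)
        omega
      have hzi : z.col i = d ∨ z.col i = c0 := by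
        by_contra hcon
        push_neg at hcon
        have h1 : d < z.col i := by omega
        have h2 : z.col i < c0 := by omega
        obtain ⟨r0, hr0i, hr0⟩ := hdmax (z.col i) h1 h2
        have hr0ne : r0 ≠ i := by omega
        have hr0z : z.col r0 = z.col i := by rw [roweq r0 hr0ne, hr0]
        have : r0 = i := z.inj hr0z
        omega
      rcases hzi with hzi | hzi
      · left
        apply Placement.ext'
        intro r
        rcases eq_or_ne r i with rfl | h1
        · rw [hzi, hccol, hci]
        · rw [roweq r h1, hccol, hcr r h1]
      · right
        apply Placement.ext'
        intro r
        rcases eq_or_ne r i with rfl | h1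
        · rw [hzi]
        · exact roweq r h1
    have huniq : ∀ x : Placement lam, MoveOnRow t x i → x = c := by
      intro x hx
      rcases hx with ⟨k', hik', hlt, hrect, hxi, hxk, hxo⟩ | hpush
      · exfalso
        have hk'le : t.col k' ≤ d := by
          by_contra h
          push_neg at h
          obtain ⟨r0, hr0, he⟩ := hdmax _ h hlt
          have : r0 = k' := t.inj he
          omega
        rcases eq_or_lt_of_le hk'le with he | hlt'
        · exact hunocc k' he
        · obtain ⟨k'', _, _, h3⟩ := firstlow k' hik' (by omega)
          exact hunocc k'' h3
      · obtain ⟨c', h1, h2, hunocc', hbetween, hxi, hxo⟩ := hpush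
        have hc'le : c' ≤ d := by
          by_contra h
          push_neg at h
          obtain ⟨r0, _, he⟩ := hdmax c' h h2
          exact hunocc' r0 he
        have hc'd : c' = d := by
          rcases eq_or_lt_of_le hc'le with he | hlt'
          · exact he
          · obtain ⟨r0, hr0, he⟩ := hbetween d hlt' (by omega)
            exact absurd he (hdnB r0 hr0)
        apply Placement.ext'
        intro r
        rcases eq_or_ne r i with rfl | hne1
        · rw [hxi, hccol, hci, hc'd]
        · rw [hxo r hne1, hccol, hcr r hne1]
    have hdom : ∀ x : Placement lam, rle x t →
        (∀ r : Fin n, (r : ℕ) < (i : ℕ) → x.col r = t.col r) →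
        x.col i ≠ t.col i → rle x c := by
      intro x hxt hlow hne
      have Hxt := (rle_iff_cnt x t).mp hxt
      have hxi_le : x.col i ≤ c0 := by
        by_contra h
        push_neg at h
        have ha := cnt_succ x.col i.isLt (c0 + 1)
        have hb := cnt_succ t.col i.isLt (c0 + 1)
        rw [show (⟨(i : ℕ), i.isLt⟩ : Fin n) = i from rfl] at ha hb
        rw [if_pos (by omega)] at ha
        rw [if_neg (by omega)] at hb
        have h1 := Hxt ((i : ℕ) + 1) (c0 + 1)
        have h2 := cnt_congr hlow (c0 + 1)
        omega
      have hxi_lt : x.col i < c0 := by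
        rcases eq_or_lt_of_le hxi_le with h | h
        · exact absurd h hne
        · exact h
      have hxi_led : x.col i ≤ d := by
        by_contra h
        push_neg at h
        obtain ⟨r0, hr0, he⟩ := hdmax _ h hxi_lt
        have : x.col r0 = x.col i := by rw [hlow r0 hr0, he]
        have : r0 = i := x.inj this
        omega
      rw [rle_iff_cnt]
      intro j q
      have hCF := CF j q
      by_cases hR : (i : ℕ) < j ∧ d < q ∧ q ≤ c0
      · obtain ⟨hj1, hq1, hq2⟩ := hR
        have hstrict : cnt x.col j q < cnt t.col j q := by
          rw [cnt_eq_sum, cnt_eq_sum]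
          apply Finset.sum_lt_sum
          · intro r _
            by_cases h1 : (r : ℕ) < j ∧ q ≤ x.col r
            · have h2 : q ≤ t.col r := by
                rcases lt_trichotomy (r : ℕ) (i : ℕ) with hc | hc | hc
                · rw [← hlow r hc]; exact h1.2
                · have hri : r = i := by omega
                  have := h1.2
                  rw [hri] at this
                  omega
                · have := HIGH r (by omega)
                  omega
              rw [if_pos h1, if_pos ⟨h1.1, h2⟩]
            · rw [if_neg h1]
              exact Nat.zero_le _
          · refine ⟨i, Finset.mem_univ _, ?_⟩
            rw [if_neg (by omega), if_pos ⟨hj1, hq2⟩]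
            omega
        rw [if_pos ⟨hj1, hq1, hq2⟩] at hCF
        omega
      · rw [if_neg hR] at hCF
        have := Hxt j q
        omega
    exact ⟨c, hmove, ⟨hrlect, hcnet, hcov⟩, huniq,
      by rw [hccol, hci]; omega,
      (by
        intro r hr
        rw [hccol, hcr r hr]),
      hdom⟩



lemma full_below (t : Placement lam) (i : Fin n)
    (ht : IsGreedy t) (heq : lam.part i = (i : ℕ) + 1) :
    ∀ m, 1 ≤ m → m ≤ lam.part i → m ≠ t.col i → ∃ r : Fin n, r < i ∧ t.col r = m := by
  classical
  have hc0pos : 1 ≤ t.col i := t.pos i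
  have hc0le : t.col i ≤ lam.part i := t.le_part i
  set B : Finset ℕ := (Finset.univ.filter fun r : Fin n => r < i).image t.col with hBdef
  have hBmem : ∀ m, m ∈ B ↔ ∃ r : Fin n, r < i ∧ t.col r = m := by
    intro m
    simp [hBdef, Finset.mem_image, Finset.mem_filter]
  have hBcard : B.card = (i : ℕ) := by
    rw [hBdef, Finset.card_image_of_injective _ t.inj]
    have : (Finset.univ.filter fun r : Fin n => r < i) = Finset.Iio i := by
      ext r; simp
    rw [this, Fin.card_Iio]
  have hsub : B ⊆ (Finset.Icc 1 (lam.part i)).erase (t.col i) := by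
    intro m hm
    obtain ⟨r, hr, rfl⟩ := (hBmem m).mp hm
    rw [Finset.mem_erase, Finset.mem_Icc]
    refine ⟨?_, t.pos r, le_trans (t.le_part r) (lam.mono (le_of_lt hr))⟩
    intro h
    have : r = i := t.inj h
    omega
  have hcard2 : ((Finset.Icc 1 (lam.part i)).erase (t.col i)).card = (i : ℕ) := by
    rw [Finset.card_erase_of_mem (Finset.mem_Icc.mpr ⟨hc0pos, hc0le⟩), Nat.card_Icc]
    omega
  have hBeq : B = (Finset.Icc 1 (lam.part i)).erase (t.col i) :=
    Finset.eq_of_subset_of_card_le hsub (by omega)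
  intro m h1 h2 h3
  have : m ∈ B := by
    rw [hBeq, Finset.mem_erase, Finset.mem_Icc]
    exact ⟨h3, h1, h2⟩
  exact (hBmem m).mp this

lemma no_move (t : Placement lam) (ht : IsGreedy t) (i : Fin n)
    (heq : lam.part i = (i : ℕ) + 1) : ¬ ∃ c : Placement lam, MoveOnRow t c i := by
  rintro ⟨c, hmv⟩
  have full := full_below t i ht heq
  rcases hmv with ⟨k', hik', hlt, _, _, _, _⟩ | hpush
  · obtain ⟨r, hr, he⟩ := full (t.col k') (t.pos k')
      (by have := t.le_part i; omega)
      (by omega)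
    have : r = k' := t.inj he
    omega
  · obtain ⟨c', h1, h2, hunocc, _, _, _⟩ := hpush
    obtain ⟨r, hr, he⟩ := full c' h1 (by have := t.le_part i; omega) (by omega)
    exact hunocc r he

lemma forced_col (t : Placement lam) (ht : IsGreedy t) (i : Fin n)
    (heq : lam.part i = (i : ℕ) + 1) (x : Placement lam)
    (hlow : ∀ r : Fin n, (r : ℕ) < (i : ℕ) → x.col r = t.col r) :
    x.col i = t.col i := by
  by_contra hne
  obtain ⟨r, hr, he⟩ := full_below t i ht heq (x.col i) (x.pos i) (x.le_part i) hne
  have : x.col r = x.col i := by rw [hlow r hr, he]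
  have : r = i := x.inj this
  omega


end Main

/-- For each row `i` with `λ_i > i` (1-based) there is exactly one element
obtained from `1̂` by a single switch or push move on the rook in row `i`, and it is a coatom;
for rows with `λ_i = i` no such move exists; the resulting map from rows with `λ_i > i` to
coatoms is a bijection. -/
theorem coatom_row_bijection {n : ℕ} (lam : Partition n) (t : Placement lam)
    (ht : IsGreedy t) :
    (∀ i : Fin n, (i : ℕ) + 1 < lam.part i →
      (∃! c : Placement lam, MoveOnRow t c i) ∧
      ∀ c : Placement lam, MoveOnRow t c i → rcovers c t) ∧
    (∀ i : Fin n, lam.part i = (i : ℕ) + 1 → ¬ ∃ c : Placement lam, MoveOnRow t c i) ∧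
    (∃ f : {i : Fin n // (i : ℕ) + 1 < lam.part i} → {c : Placement lam // rcovers c t},
      Function.Bijective f ∧ ∀ i, MoveOnRow t (f i).1 i.1) := by
  classical
  refine ⟨?_, ?_, ?_⟩
  · intro i hi
    obtain ⟨c, hmove, hcov, huniq, _, _, _⟩ := exists_coatom t ht i hi
    exact ⟨⟨c, hmove, fun y hy => huniq y hy⟩, fun c' h => (huniq c' h) ▸ hcov⟩
  · intro i heq
    exact no_move t ht i heq
  · set spec := fun i : {i : Fin n // (i : ℕ) + 1 < lam.part i} =>
      exists_coatom t ht i.1 i.2 with hspecdef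
    refine ⟨fun i => ⟨(spec i).choose, (spec i).choose_spec.2.1⟩, ⟨?_, ?_⟩, ?_⟩
    · intro a b hab
      by_contra hne
      have hne1 : a.1 ≠ b.1 := fun h => hne (Subtype.ext h)
      have h1 := (spec a).choose_spec.2.2.2.1
      have h2 := (spec b).choose_spec.2.2.2.2.1 a.1 hne1
      have hcc : (spec a).choose = (spec b).choose := congrArg Subtype.val hab
      rw [hcc] at h1
      omega
    · rintro ⟨x, hx⟩
      have hne : x ≠ t := hx.2.1
      set D := Finset.univ.filter (fun r : Fin n => x.col r ≠ t.col r) with hDdef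
      have hDne : D.Nonempty := by
        by_contra h
        rw [Finset.not_nonempty_iff_eq_empty] at h
        apply hne
        apply Placement.ext'
        intro r
        by_contra hr
        have hmem : r ∈ D := by rw [hDdef]; simp [hr]
        rw [h] at hmem
        exact absurd hmem (Finset.notMem_empty r)
      set i0 := D.min' hDne with hi0def
      have hi0mem := D.min'_mem hDne
      have hi0ne : x.col i0 ≠ t.col i0 := (Finset.mem_filter.mp hi0mem).2
      have hlow : ∀ r : Fin n, (r : ℕ) < (i0 : ℕ) → x.col r = t.col r := by
        intro r hr
        by_contra hc
        have hmem : r ∈ D := by rw [hDdef]; simp [hc]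
        have := D.min'_le r hmem
        omega
      have hpart : (i0 : ℕ) + 1 < lam.part i0 := by
        have hst := lam.staircase i0
        by_contra h
        have heq : lam.part i0 = (i0 : ℕ) + 1 := by omega
        exact hi0ne (forced_col t ht i0 heq x hlow)
      have hcs := (spec ⟨i0, hpart⟩).choose_spec
      have hdomx : rle x (spec ⟨i0, hpart⟩).choose := hcs.2.2.2.2.2 x hx.1 hlow hi0ne
      have hcovers : rcovers (spec ⟨i0, hpart⟩).choose t := hcs.2.1
      rcases hx.2.2 (spec ⟨i0, hpart⟩).choose hdomx hcovers.1 with h | h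
      · exact ⟨⟨i0, hpart⟩, Subtype.ext h⟩
      · exact absurd h hcovers.2.1
    · intro i
      exact (spec i).choose_spec.1


end RookPoset
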